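/- arXiv:1012.4076 — 6 statements merged into one kernel-verified Lean document; each statement's English description precedes it below -/
import Mathlib

section
/- Let 𝕂 be a Hausdorff topological field, X a set, and equip 𝕂^X with the product topology. If ℓ : 𝕂^X → 𝕂 is a continuous linear form, then ℓ(δ_x) = 0 for all but finitely many x ∈ X. -/
/-- Let `K` be a Hausdorff topological field, `X` a set, and equip `K^X = X → K` with the
product topology.  If `ℓ : K^X → K` is a continuous linear form, then `ℓ(δ_x) = 0` for
all but finitely many `x ∈ X`. -/
theorem stmt6 {K : Type*} [Field K] [TopologicalSpace K] [IsTopologicalDivisionRing K]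
    [T2Space K] {X : Type*} [DecidableEq X] (ℓ : (X → K) →L[K] K) :
    {x : X | ℓ (Pi.single x (1 : K)) ≠ 0}.Finite := by
  have hV : ({1}ᶜ : Set K) ∈ nhds (0 : K) := by
    refine (isClosed_singleton.isOpen_compl).mem_nhds ?_
    simp
  have h0 : Filter.Tendsto ℓ (nhds 0) (nhds 0) := by
    simpa using ℓ.continuous.tendsto 0
  have hpre : ℓ ⁻¹' ({1}ᶜ : Set K) ∈ nhds (0 : X → K) := h0 hV
  rw [nhds_pi, Filter.mem_pi] at hpre
  obtain ⟨I, hI, U, hU, hsub⟩ := hpre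
  refine hI.subset fun x hx => ?_
  by_contra hxI
  set c := ℓ (Pi.single x (1 : K)) with hc
  have hcne : c ≠ 0 := hx
  have hg : (c⁻¹ • (Pi.single x (1 : K) : X → K)) ∈ I.pi U := by
    intro i hi
    have hix : i ≠ x := fun h => hxI (h ▸ hi)
    have : (c⁻¹ • (Pi.single x (1 : K) : X → K)) i = 0 := by
      simp [Pi.single_eq_of_ne hix]
    rw [this]
    exact mem_of_mem_nhds (hU i)
  have := hsub hg
  apply this
  show ℓ _ ∈ ({1} : Set K)
  simp [map_smul, ← hc, inv_mul_cancel₀ hcne]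
end

section
/- Let 𝕂 be a Hausdorff topological field, X a set, and equip 𝕂^X with the product topology. Then the map Φ : 𝕂^(X) → (𝕂^X)′, Φ(p)(f) = ∑_{x∈X} p(x)f(x), is surjective: every continuous linear form ℓ on 𝕂^X equals Φ(p_ℓ) where p_ℓ ∈ 𝕂^(X) is defined by p_ℓ(x) = ℓ(δ_x); equivalently, ℓ(f) = ∑_{x∈X} ℓ(δ_x) f(x) for all f ∈ 𝕂^X. -/
/-- Let `K` be a Hausdorff topological field, `X` a set, and equip `K^X = X → K` with the
product topology.  The map `Φ : K^(X) → (K^X)'`, `Φ(p)(f) = ∑ x, p x * f x`, is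
surjective: every continuous linear form `ℓ` on `K^X` equals `Φ(p_ℓ)` where
`p_ℓ(x) = ℓ(δ_x)`; equivalently `ℓ f = ∑ x, ℓ(δ_x) * f x` for all `f`. -/
theorem stmt7 {K : Type*} [Field K] [TopologicalSpace K] [IsTopologicalDivisionRing K]
    [T2Space K] {X : Type*} [DecidableEq X] (ℓ : (X → K) →L[K] K) :
    ∃ p : X →₀ K, (∀ x : X, p x = ℓ (Pi.single x (1 : K))) ∧
      ∀ f : X → K, ℓ f = ∑ x ∈ p.support, p x * f x := by
  have hU : ℓ ⁻¹' {(1 : K)}ᶜ ∈ nhds (0 : X → K) := by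
    apply ℓ.continuous.continuousAt.preimage_mem_nhds
    rw [map_zero]
    exact IsOpen.mem_nhds isOpen_compl_singleton (by simp)
  rw [nhds_pi, Filter.mem_pi] at hU
  obtain ⟨I, hIfin, t, ht, hsub⟩ := hU
  -- ℓ vanishes on functions vanishing on I
  have key : ∀ g : X → K, (∀ x ∈ I, g x = 0) → ℓ g = 0 := by
    intro g hg
    by_contra h
    have hmem : (ℓ g)⁻¹ • g ∈ I.pi t := by
      intro x hx
      have : ((ℓ g)⁻¹ • g) x = 0 := by simp [Pi.smul_apply, hg x hx]
      rw [this]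
      exact mem_of_mem_nhds (ht x)
    have := hsub hmem
    simp [map_smul, inv_mul_cancel₀ h] at this
  have hx0 : ∀ x, x ∉ I → ℓ (Pi.single x (1 : K)) = 0 := by
    intro x hx
    apply key
    intro y hy
    exact Pi.single_eq_of_ne (by rintro rfl; exact hx hy) 1
  refine ⟨Finsupp.onFinset hIfin.toFinset (fun x => ℓ (Pi.single x (1 : K)))
    (fun x hx => hIfin.mem_toFinset.mpr (by by_contra h; exact hx (hx0 x h))), fun x => rfl, ?_⟩
  intro f
  set F := hIfin.toFinset with hF
  set p := Finsupp.onFinset F (fun x => ℓ (Pi.single x (1 : K)))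
    (fun x hx => hIfin.mem_toFinset.mpr (by by_contra h; exact hx (hx0 x h))) with hp
  set s : X → K := ∑ x ∈ F, f x • (Pi.single x (1 : K) : X → K) with hs
  have hdecomp : f = s + (f - s) := by abel
  have hg0 : ∀ y ∈ I, (f - s) y = 0 := by
    intro y hy
    have hyF : y ∈ F := hIfin.mem_toFinset.mpr hy
    have : s y = f y := by
      rw [hs, Finset.sum_apply]
      rw [Finset.sum_eq_single y]
      · simp
      · intro b _ hb
        simp [Pi.single_eq_of_ne (Ne.symm hb)]
      · exact fun h => absurd hyF h
    simp [this]
  have hsumF : ℓ f = ∑ x ∈ F, p x * f x := by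
    conv_lhs => rw [hdecomp]
    rw [map_add, key _ hg0, add_zero, map_sum]
    refine Finset.sum_congr rfl fun x _ => ?_
    rw [map_smul]
    simp [hp, mul_comm]
  rw [hsumF]
  refine (Finset.sum_subset Finsupp.support_onFinset_subset fun x _ hx => ?_).symm
  rw [Finsupp.notMem_support_iff.mp hx, zero_mul]
end

section
/- Let 𝕂 be a topological field, X an infinite set, and equip 𝕂^X with the product topology. Then the topological dual (𝕂^X)′ is isomorphic (as a 𝕂-vector space) to 𝕂^(X) if, and only if, the topology of 𝕂 is Hausdorff. -/
open Cardinal Module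

section aux
variable {K : Type*} [Field K] [TopologicalSpace K] [IsTopologicalDivisionRing K] {X : Type*}

noncomputable def stmt8Pairing (X : Type*) : (X →₀ K) →ₗ[K] ((X → K) →L[K] K) :=
  Finsupp.lsum K fun x => LinearMap.toSpanSingleton K _ (ContinuousLinearMap.proj x)

lemma stmt8Pairing_apply (f : X →₀ K) (g : X → K) :
    stmt8Pairing X f g = ∑ x ∈ f.support, f x * g x := by
  classical
  simp only [stmt8Pairing, Finsupp.lsum_apply, Finsupp.sum, LinearMap.toSpanSingleton_apply]
  rw [ContinuousLinearMap.coe_sum', Finset.sum_apply]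
  simp [smul_eq_mul]

lemma stmt8Pairing_inj : Function.Injective (stmt8Pairing (K := K) X) := by
  classical
  rw [injective_iff_map_eq_zero]
  intro f hf
  ext x₀
  have := congrArg (fun φ => φ (Pi.single x₀ (1:K))) hf
  simp only [stmt8Pairing_apply, ContinuousLinearMap.zero_apply] at this
  simpa [Pi.single_apply, Finset.sum_ite_eq', Finsupp.mem_support_iff] using this

lemma stmt8Pairing_surj [T2Space K] : Function.Surjective (stmt8Pairing (K := K) X) := by
  classical
  intro φ
  have h1 : ({(1:K)}ᶜ : Set K) ∈ nhds (0 : K) :=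
    (isOpen_compl_singleton).mem_nhds (by simp)
  have h2 : φ ⁻¹' {(1:K)}ᶜ ∈ nhds (0 : X → K) := by
    have := φ.continuous.continuousAt (x := (0 : X → K))
    rw [ContinuousAt, map_zero] at this
    exact this h1
  rw [nhds_pi, Filter.mem_pi] at h2
  obtain ⟨I, hIfin, t, ht, hsub⟩ := h2
  -- key claim
  have key : ∀ g : X → K, (∀ x ∈ I, g x = 0) → φ g = 0 := by
    intro g hg
    by_contra hc
    have hmem : (φ g)⁻¹ • g ∈ I.pi t := by
      intro x hx
      simp only [Pi.smul_apply, hg x hx, smul_zero]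
      exact mem_of_mem_nhds (ht x)
    have := hsub hmem
    simp only [Set.mem_preimage, Set.mem_compl_iff, Set.mem_singleton_iff] at this
    exact this (by rw [map_smul, smul_eq_mul, inv_mul_cancel₀ hc])
  set S : Finset X := hIfin.toFinset with hS
  refine ⟨Finsupp.onFinset S (fun x => φ (Pi.single x 1)) ?_, ?_⟩
  · intro x hx
    by_contra hxS
    apply hx
    refine key _ fun y hy => ?_
    have : y ≠ x := by rintro rfl; exact hxS (hIfin.mem_toFinset.2 hy)
    exact Pi.single_eq_of_ne this 1
  · ext g
    rw [stmt8Pairing_apply]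
    have hφg : φ g = ∑ x ∈ S, g x * φ (Pi.single x 1) := by
      have hdiff : φ (g - ∑ x ∈ S, g x • (Pi.single x (1:K) : X → K)) = 0 := by
        refine key _ fun y hy => ?_
        have hyS : y ∈ S := hIfin.mem_toFinset.2 hy
        simp only [Pi.sub_apply, Finset.sum_apply, Pi.smul_apply, smul_eq_mul,
          Pi.single_apply, mul_ite, mul_one, mul_zero, Finset.sum_ite_eq, hyS, if_pos]
        exact sub_self _
      have := map_sub φ g (∑ x ∈ S, g x • (Pi.single x (1:K) : X → K))
      rw [hdiff, eq_comm, sub_eq_zero] at this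
      rw [this, map_sum]
      simp [map_smul, smul_eq_mul]
    rw [hφg]
    refine (Finset.sum_subset Finsupp.support_onFinset_subset fun x _ hxns => ?_).trans
      (Finset.sum_congr rfl fun x _ => ?_)
    · rw [Finsupp.notMem_support_iff] at hxns; rw [hxns, zero_mul]
    · rw [Finsupp.onFinset_apply, mul_comm]
end aux

/-- Let `K` be a topological field (Hausdorff or not), `X` an infinite set, and equip
`K^X = X → K` with the product topology.  Then the topological dual `(K^X)'` is
isomorphic, as a `K`-vector space, to the space `K^(X) = X →₀ K` of finitely
supported functions if, and only if, the topology of `K` is Hausdorff. -/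
theorem stmt8 {K : Type*} [Field K] [TopologicalSpace K] [IsTopologicalDivisionRing K]
    (X : Type*) [Infinite X] :
    Nonempty ((X →₀ K) ≃ₗ[K] ((X → K) →L[K] K)) ↔ T2Space K := by
  constructor
  · rintro ⟨e⟩
    rcases (⊥ : Ideal K).closure.eq_bot_or_top with hC | hC
    · rw [IsTopologicalAddGroup.t2Space_iff_zero_closed]
      refine isClosed_of_closure_subset fun a ha => ?_
      have : a ∈ (⊥ : Ideal K).closure := by
        change a ∈ closure ((⊥ : Ideal K) : Set K)
        simpa using ha
      rw [hC] at this
      simpa using this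
    · exfalso
      have hall : ∀ a : K, a ∈ closure ({0} : Set K) := by
        intro a
        have : a ∈ (⊥ : Ideal K).closure := by rw [hC]; trivial
        have h' : a ∈ closure ((⊥ : Ideal K) : Set K) := this
        simpa using h'
      have huniv : ∀ U : Set K, IsOpen U → U.Nonempty → U = Set.univ := by
        rintro U hU ⟨a, ha⟩
        ext c
        simp only [Set.mem_univ, iff_true]
        have hV : IsOpen ((fun y => y + c) ⁻¹' U) := hU.preimage (continuous_add_right c)
        have hac : (a - c) ∈ (fun y => y + c) ⁻¹' U := by
          simp only [Set.mem_preimage, sub_add_cancel]; exact ha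
        have := (mem_closure_iff.1 (hall (a - c))) _ hV hac
        obtain ⟨y, hyV, hy0⟩ := this
        rw [Set.mem_singleton_iff] at hy0
        subst hy0
        simpa using hyV
      have hcont : ∀ ψ : (X → K) →ₗ[K] K, Continuous ψ := by
        intro ψ
        rw [continuous_def]
        intro U hU
        rcases U.eq_empty_or_nonempty with rfl | hne
        · simp
        · rw [huniv U hU hne]; simp
      let e2 : ((X → K) →L[K] K) ≃ₗ[K] ((X → K) →ₗ[K] K) :=
        { toFun := fun φ => φ.toLinearMap
          map_add' := fun _ _ => rfl
          map_smul' := fun _ _ => rfl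
          invFun := fun ψ => ⟨ψ, hcont ψ⟩
          left_inv := fun _ => rfl
          right_inv := fun _ => rfl }
      let e3 := e.trans e2
      have hle : Module.rank K (X →₀ K) ≤ Module.rank K (X → K) :=
        (Finsupp.lcoeFun (R := K) (M := K) (α := X)).rank_le_of_injective
          (fun a b h => DFunLike.coe_injective h)
      have hinf : ℵ₀ ≤ Module.rank K (X → K) := by
        refine le_trans ?_ hle
        rw [rank_finsupp_self]
        exact aleph0_le_lift.2 (aleph0_le_mk X)
      have hlt := lift_rank_lt_rank_dual (K := K) (V := X → K) hinf
      rw [lift_id'] at hlt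
      have hrank1 : Module.rank K (X →₀ K) = Module.rank K ((X → K) →ₗ[K] K) := e3.rank_eq
      rw [← hrank1] at hlt
      exact absurd (hle.trans_lt hlt) (lt_irrefl _)
  · intro _
    exact ⟨LinearEquiv.ofBijective (stmt8Pairing X) ⟨stmt8Pairing_inj, stmt8Pairing_surj⟩⟩
end

section
/- Let 𝕂 be a Hausdorff topological field, X and Y sets, and equip 𝕂^X and 𝕂^Y with the product topologies. For a continuous linear map φ : 𝕂^X → 𝕂^Y, define M_φ : Y × X → 𝕂 by M_φ(y,x) = φ(δ_x)(y). Then M_φ is row-finite, i.e., M_φ ∈ 𝕂^{Y×(X)} ( for each y ∈ Y, the set { x ∈ X : M_φ(y,x) ≠ 0 } is finite ), and the map φ ↦ M_φ from L(𝕂^X, 𝕂^Y) to 𝕂^{Y×(X)} is injective. -/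
set_option maxHeartbeats 2000000 in
set_option synthInstance.maxHeartbeats 400000 in
/-- Let `K` be a Hausdorff topological field and `X`, `Y` sets, with `K^X` and `K^Y`
carrying the product topologies.  For a continuous linear map `φ : K^X → K^Y`, the
matrix `M_φ(y, x) = φ(δ_x)(y)` is row-finite (for each `y`, the set
`{x | M_φ(y,x) ≠ 0}` is finite), and the map `φ ↦ M_φ` is injective. -/
theorem stmt10 {K : Type*} [Field K] [TopologicalSpace K] [IsTopologicalDivisionRing K]
    [T2Space K] (X Y : Type*) [DecidableEq X] :
    (∀ φ : (X → K) →L[K] (Y → K), ∀ y : Y,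
        {x : X | φ (Pi.single x (1 : K)) y ≠ 0}.Finite) ∧
    Function.Injective
      (fun (φ : (X → K) →L[K] (Y → K)) => fun (y : Y) (x : X) =>
        φ (Pi.single x (1 : K)) y) := by
  constructor
  · intro φ y
    set ψ : (X → K) →L[K] K := (ContinuousLinearMap.proj y).comp φ with hψ
    have hψval : ∀ f, ψ f = φ f y := fun f => rfl
    have hU : ({(1:K)}ᶜ : Set K) ∈ nhds (0:K) :=
      IsOpen.mem_nhds isOpen_compl_singleton (by simp)
    have hnh : ψ ⁻¹' {(1:K)}ᶜ ∈ nhds (0 : X → K) := by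
      have h := ψ.continuous.continuousAt (x := (0 : X → K))
      rw [ContinuousAt, map_zero] at h
      exact h hU
    rw [nhds_pi, Filter.mem_pi] at hnh
    obtain ⟨I, hIfin, t, ht, hsub⟩ := hnh
    apply hIfin.subset
    intro x hx
    by_contra hxI
    have hx' : φ (Pi.single x (1:K)) y ≠ 0 := hx
    have hmem : (φ (Pi.single x (1:K)) y)⁻¹ • (Pi.single x (1:K) : X → K) ∈ Set.pi I t := by
      intro i hi
      have hne : i ≠ x := fun h => hxI (h ▸ hi)
      have : ((φ (Pi.single x (1:K)) y)⁻¹ • (Pi.single x (1:K) : X → K)) i = 0 := by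
        simp [Pi.single_apply, hne]
      rw [this]
      have := ht i
      rw [Pi.zero_apply] at this
      exact mem_of_mem_nhds this
    have := hsub hmem
    apply this
    show ψ ((φ (Pi.single x (1:K)) y)⁻¹ • (Pi.single x (1:K) : X → K)) = 1
    rw [map_smul, hψval, smul_eq_mul, inv_mul_cancel₀ hx']
  · intro φ ψ h
    have h' : ∀ x : X, φ (Pi.single x (1:K)) = ψ (Pi.single x (1:K)) := by
      intro x
      funext y
      exact congrFun (congrFun h y) x
    set S : Set (X → K) := Set.range fun x : X => Pi.single x (1:K) with hS
    have hd : Dense (↑(Submodule.span K S) : Set (X → K)) := by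
      intro f
      rw [mem_closure_iff_nhds]
      intro U hU
      rw [nhds_pi, Filter.mem_pi] at hU
      obtain ⟨I, hIfin, t, ht, hsub⟩ := hU
      classical
      refine ⟨∑ x ∈ hIfin.toFinset, f x • (Pi.single x (1:K) : X → K), ?_, ?_⟩
      · apply hsub
        intro i hi
        have hval : (∑ x ∈ hIfin.toFinset, f x • (Pi.single x (1:K) : X → K)) i = f i := by
          rw [Finset.sum_apply]
          simp only [Pi.smul_apply, Pi.single_apply, smul_eq_mul, mul_ite, mul_one, mul_zero]
          rw [Finset.sum_ite_eq hIfin.toFinset i f]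
          simp [hi]
        rw [hval]
        exact mem_of_mem_nhds (ht i)
      · exact Submodule.sum_mem _ fun x _ =>
          Submodule.smul_mem _ _ (Submodule.subset_span ⟨x, rfl⟩)
    have heq : Set.EqOn (⇑φ) (⇑ψ) (↑(Submodule.span K S)) := by
      apply LinearMap.eqOn_span (f := (φ : (X → K) →ₗ[K] (Y → K)))
        (g := (ψ : (X → K) →ₗ[K] (Y → K)))
      rintro _ ⟨x, rfl⟩
      exact h' x
    have : (⇑φ : (X → K) → (Y → K)) = ⇑ψ :=
      Continuous.ext_on hd φ.continuous ψ.continuous heq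
    ext f
    exact congrFun (congrFun this f) _
end

section
/- Let (𝕂, τ) be a Hausdorff topological field and X a set; equip 𝕂^X with the weak topology induced by the linear forms f ↦ ∑_{x∈X} p(x)f(x) for p ∈ 𝕂^(X). Then a linear form ℓ : 𝕂^X → 𝕂 is continuous for this weak topology if, and only if, it is continuous for the product topology; consequently the weak dual (𝕂^X)′_w is isomorphic, as a 𝕂-vector space, to 𝕂^(X). -/
/-- The weak topology on `K^X = X → K`: the coarsest topology making every linear form
`f ↦ ∑ x, p x * f x`, `p ∈ K^(X)`, continuous into `(K, τ)`. -/
def weakTop (K : Type*) [Field K] (τ : TopologicalSpace K) (X : Type*) :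
    TopologicalSpace (X → K) :=
  ⨅ p : X →₀ K,
    TopologicalSpace.induced (fun f : X → K => ∑ x ∈ p.support, p x * f x) τ


open Filter Topology

section Aux
variable {K : Type*} [Field K] [τ : TopologicalSpace K] [IsTopologicalDivisionRing K]
  [T2Space K] (X : Type*)

lemma weakTop_eq : weakTop K τ X = (Pi.topologicalSpace : TopologicalSpace (X → K)) := by
  apply le_antisymm
  · refine le_iInf fun x => ?_
    have h : (fun f : X → K => ∑ y ∈ (Finsupp.single x (1:K)).support,
        Finsupp.single x (1:K) y * f y) = fun f : X → K => f x := by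
      funext f
      rw [Finsupp.support_single_ne_zero x one_ne_zero]
      simp
    calc weakTop K τ X ≤ TopologicalSpace.induced
          (fun f : X → K => ∑ y ∈ (Finsupp.single x (1:K)).support,
            Finsupp.single x (1:K) y * f y) τ := iInf_le _ _
      _ = TopologicalSpace.induced (fun f : X → K => f x) τ := by rw [h]
  · refine le_iInf fun p => ?_
    rw [← continuous_iff_le_induced]
    exact continuous_finset_sum _ fun x _ => continuous_const.mul (continuous_apply x)
end Aux

section Aux2
variable {K : Type*} [Field K] [τ : TopologicalSpace K] [IsTopologicalDivisionRing K]
  [T2Space K] {X : Type*} [DecidableEq X]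

noncomputable def Phi : (X →₀ K) →ₗ[K] ((X → K) →ₗ[K] K) :=
  Finsupp.lsum K fun x => LinearMap.toSpanSingleton K _ (LinearMap.proj x)

lemma Phi_apply (p : X →₀ K) (f : X → K) :
    Phi p f = ∑ x ∈ p.support, p x * f x := by
  simp [Phi, Finsupp.lsum, Finsupp.sum, LinearMap.toSpanSingleton, smul_eq_mul]

lemma Phi_single (p : X →₀ K) (x : X) : Phi p (Pi.single x 1) = p x := by
  rw [Phi_apply]
  by_cases hx : x ∈ p.support
  · rw [Finset.sum_eq_single x]
    · simp
    · intro y _ hy; simp [Pi.single_apply, hy]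
    · intro h; exact absurd hx h
  · rw [Finset.sum_eq_zero]
    · simp at hx; simp [hx]
    · intro y hy
      have : y ≠ x := fun h => hx (h ▸ hy)
      simp [Pi.single_apply, this]

lemma Phi_injective : Function.Injective (Phi (K := K) (X := X)) := by
  intro p q h
  ext x
  rw [← Phi_single p x, ← Phi_single q x, h]

/-- A Pi-continuous linear form vanishes on functions vanishing on some finite set. -/
lemma exists_finset (ℓ : (X → K) →ₗ[K] K)
    (hℓ : @Continuous (X → K) K Pi.topologicalSpace τ ℓ) :
    ∃ S : Finset X, ∀ f : X → K, (∀ x ∈ S, f x = 0) → ℓ f = 0 := by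
  have h0 : ℓ ⁻¹' {(1:K)}ᶜ ∈ 𝓝 (0 : X → K) := by
    refine hℓ.continuousAt.preimage_mem_nhds ?_
    refine isOpen_compl_singleton.mem_nhds ?_
    simp
  rw [nhds_pi] at h0
  obtain ⟨I, hIfin, V, hV, hsub⟩ := Filter.mem_pi.mp h0
  refine ⟨hIfin.toFinset, fun f hf => ?_⟩
  by_contra hne
  have key : ∀ t : K, (t • f) ∈ I.pi V := by
    intro t x hx
    have : f x = 0 := hf x (hIfin.mem_toFinset.mpr hx)
    simp only [Pi.smul_apply, this, smul_zero]
    have hx0 : (0:K) ∈ V x := mem_of_mem_nhds (by simpa using hV x)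
    exact hx0
  have := hsub (key (ℓ f)⁻¹)
  simp only [Set.mem_preimage, Set.mem_compl_iff, Set.mem_singleton_iff] at this
  exact this (by rw [map_smul, smul_eq_mul, inv_mul_cancel₀ hne])

lemma mem_range (ℓ : (X → K) →ₗ[K] K)
    (hℓ : @Continuous (X → K) K Pi.topologicalSpace τ ℓ) :
    ∃ p : X →₀ K, Phi p = ℓ := by
  obtain ⟨S, hS⟩ := exists_finset ℓ hℓ
  refine ⟨Finsupp.onFinset S (fun x => if x ∈ S then ℓ (Pi.single x 1) else 0)
    (fun a ha => by by_contra h; simp [h] at ha), ?_⟩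
  ext f
  rw [Phi_apply]
  rw [Finset.sum_subset (Finsupp.support_onFinset_subset)
    (fun x hx hns => by rw [Finsupp.notMem_support_iff.mp hns, zero_mul])]
  have hrep : ℓ f = ∑ x ∈ S, f x * ℓ (Pi.single x 1) := by
    have hg : ∀ x ∈ S, (f - ∑ y ∈ S, f y • (Pi.single y 1 : X → K)) x = 0 := by
      intro x hx
      simp only [Pi.sub_apply, Finset.sum_apply, Pi.smul_apply]
      rw [Finset.sum_eq_single x]
      · simp
      · intro y _ hy; simp [Pi.single_apply, hy]
      · intro h; exact absurd hx h
    have := hS _ hg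
    rw [map_sub, sub_eq_zero] at this
    rw [this, map_sum]
    simp [smul_eq_mul]
  rw [hrep]
  refine Finset.sum_congr rfl fun x hx => ?_
  simp [Finsupp.onFinset_apply, hx, mul_comm]
end Aux2

/-- Let `(K, τ)` be a Hausdorff topological field and `X` a set; equip `K^X` with the
weak topology induced by the linear forms `f ↦ ∑ x, p x * f x`, `p ∈ K^(X)`.  A linear
form `ℓ : K^X → K` is continuous for this weak topology iff it is continuous for the
product topology; consequently the weak dual of `K^X` is isomorphic, as a `K`-vector
space, to `K^(X)`: there is an injective linear map `Φ` from `K^(X)` into the algebraic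
dual, given by the dual pairing, whose range is exactly the set of weakly continuous
linear forms. -/
theorem stmt14 {K : Type*} [Field K] [τ : TopologicalSpace K] [IsTopologicalDivisionRing K]
    [T2Space K] (X : Type*) :
    (∀ ℓ : (X → K) →ₗ[K] K,
        @Continuous (X → K) K (weakTop K τ X) τ ℓ ↔
          @Continuous (X → K) K Pi.topologicalSpace τ ℓ) ∧
    ∃ Φ : (X →₀ K) →ₗ[K] ((X → K) →ₗ[K] K),
      Function.Injective Φ ∧
      (∀ (p : X →₀ K) (f : X → K), Φ p f = ∑ x ∈ p.support, p x * f x) ∧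
      (∀ ℓ : (X → K) →ₗ[K] K,
        @Continuous (X → K) K (weakTop K τ X) τ ℓ ↔ ℓ ∈ Set.range Φ) := by
  haveI := Classical.decEq X
  refine ⟨fun ℓ => by rw [weakTop_eq], ⟨Phi, Phi_injective, fun p f => Phi_apply p f,
    fun ℓ => ?_⟩⟩
  rw [weakTop_eq]
  constructor
  · exact fun h => mem_range ℓ h
  · rintro ⟨p, rfl⟩
    have h : Continuous fun f : X → K => ∑ x ∈ p.support, p x * f x :=
      continuous_finset_sum _ fun x _ => continuous_const.mul (continuous_apply x)
    have he : ⇑(Phi p) = fun f : X → K => ∑ x ∈ p.support, p x * f x := by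
      funext f; exact Phi_apply p f
    rw [he]; exact h
end

section
/- Let 𝕂 be a field with the discrete topology and X a set; equip 𝕂^X with the product topology and 𝕂^(X) with the subspace topology induced from 𝕂^X. Then the map Ψ sending a continuous linear form ℓ on 𝕂^(X) to the linear form Ψ(ℓ) : 𝕂^X → 𝕂, f ↦ ∑_{x∈X} f(x) ℓ(δ_x), is well defined (Ψ(ℓ) is continuous and the family (f(x)ℓ(δ_x))_{x∈X} is summable), Ψ(ℓ) extends ℓ (Ψ(ℓ) agrees with ℓ on 𝕂^(X)), and Ψ is a linear isomorphism from (𝕂^(X))′ onto (𝕂^X)′. -/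
/-- The subspace `K^(X)` of finitely supported functions, as a submodule of `K^X`;
as a subtype of `X → K` it carries the subspace topology induced by the product
topology on `X → K`. -/
def finSuppSubmodule (K : Type*) [Field K] (X : Type*) : Submodule K (X → K) where
  carrier := {f | (Function.support f).Finite}
  add_mem' := fun hf hg => ((hf.union hg).subset (Function.support_add _ _))
  zero_mem' := by simp
  smul_mem' := by
    intro c f hf
    refine hf.subset fun x hx => ?_
    simp only [Function.mem_support, Pi.smul_apply, smul_eq_mul] at hx ⊢
    intro h
    exact hx (by rw [h, mul_zero])

/-- The characteristic function `δ_x` as an element of `K^(X)`. -/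
def deltaFin (K : Type*) [Field K] {X : Type*} [DecidableEq X] (x : X) :
    finSuppSubmodule K X :=
  ⟨Pi.single x (1 : K), by
    show (Function.support (Pi.single x (1 : K))).Finite
    exact (Set.finite_singleton x).subset Pi.support_single_subset⟩

section Aux

variable {K : Type*} [Field K] [TopologicalSpace K] [DiscreteTopology K]
    [IsTopologicalRing K] {X : Type*} [DecidableEq X]

lemma sum_single_apply (S : Finset X) (f : X → K) {y : X} (hy : y ∈ S) :
    (∑ x ∈ S, f x • (Pi.single x (1 : K) : X → K)) y = f y := by
  rw [Finset.sum_apply]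
  rw [Finset.sum_eq_single y]
  · simp
  · intro x hx hxy
    simp [Pi.single_apply, Ne.symm hxy]
  · intro h; exact absurd hy h

lemma exists_finset_support (L : (X → K) →L[K] K) :
    ∃ S : Finset X, ∀ f : X → K, (∀ x ∈ S, f x = 0) → L f = 0 := by
  have h0 : L ⁻¹' {0} ∈ nhds (0 : X → K) := by
    refine IsOpen.mem_nhds (L.continuous.isOpen_preimage _ (isOpen_discrete {0})) ?_
    simp
  rw [nhds_pi, Filter.mem_pi] at h0
  obtain ⟨I, hI, t, ht, hsub⟩ := h0
  refine ⟨hI.toFinset, fun f hf => ?_⟩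
  have hmem : f ∈ Set.pi I t := fun x hx => by
    rw [hf x (hI.mem_toFinset.mpr hx)]
    exact mem_of_mem_nhds (ht x)
  exact hsub hmem

lemma exists_finset_support' (ℓ : (finSuppSubmodule K X) →L[K] K) :
    ∃ S : Finset X, ∀ p : finSuppSubmodule K X,
      (∀ x ∈ S, (p : X → K) x = 0) → ℓ p = 0 := by
  have h0 : ℓ ⁻¹' {0} ∈ nhds (0 : finSuppSubmodule K X) := by
    refine IsOpen.mem_nhds (ℓ.continuous.isOpen_preimage _ (isOpen_discrete {0})) ?_
    simp
  rw [mem_nhds_subtype] at h0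
  obtain ⟨u, hu, husub⟩ := h0
  have hu' : u ∈ nhds (0 : X → K) := hu
  rw [nhds_pi, Filter.mem_pi] at hu'
  obtain ⟨I, hI, t, ht, hsub⟩ := hu'
  refine ⟨hI.toFinset, fun p hp => ?_⟩
  have hmem : (p : X → K) ∈ Set.pi I t := fun x hx => by
    rw [hp x (hI.mem_toFinset.mpr hx)]
    exact mem_of_mem_nhds (ht x)
  exact husub (hsub hmem)

lemma repr_lemma (L : (X → K) →L[K] K) (S : Finset X)
    (hS : ∀ f : X → K, (∀ x ∈ S, f x = 0) → L f = 0) (f : X → K) :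
    L f = ∑ x ∈ S, f x * L (Pi.single x (1 : K)) := by
  have key : L (f - ∑ x ∈ S, f x • (Pi.single x (1 : K) : X → K)) = 0 := by
    refine hS _ fun y hy => ?_
    simp [sum_single_apply S f hy]
  have := map_sub L f (∑ x ∈ S, f x • (Pi.single x (1 : K) : X → K))
  rw [key] at this
  have h2 : L (∑ x ∈ S, f x • (Pi.single x (1 : K) : X → K)) = ∑ x ∈ S, f x * L (Pi.single x (1 : K)) := by
    rw [map_sum]
    exact Finset.sum_congr rfl fun x _ => by
      rw [map_smul, smul_eq_mul]
  exact (sub_eq_zero.mp this.symm).trans h2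
  

/-- Restriction of a continuous linear form on `K^X` to `K^(X)`. -/
def restrictCLM : ((X → K) →L[K] K) →ₗ[K] ((finSuppSubmodule K X) →L[K] K) where
  toFun L := L.comp (Submodule.subtypeL _)
  map_add' L L' := by ext p; rfl
  map_smul' c L := by ext p; rfl

lemma restrict_injective :
    Function.Injective (restrictCLM (K := K) (X := X)) := by
  intro L L' h
  obtain ⟨S, hS⟩ := exists_finset_support L
  obtain ⟨S', hS'⟩ := exists_finset_support L'
  have hδ : ∀ x : X, L (Pi.single x (1 : K)) = L' (Pi.single x (1 : K)) := by
    intro x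
    have := congrArg (fun ℓ : (finSuppSubmodule K X) →L[K] K => ℓ (deltaFin K x)) h
    exact this
  ext f
  have hS2 : ∀ g : X → K, (∀ x ∈ S ∪ S', g x = 0) → L g = 0 :=
    fun g hg => hS g fun x hx => hg x (Finset.mem_union_left _ hx)
  have hS2' : ∀ g : X → K, (∀ x ∈ S ∪ S', g x = 0) → L' g = 0 :=
    fun g hg => hS' g fun x hx => hg x (Finset.mem_union_right _ hx)
  rw [repr_lemma L (S ∪ S') hS2 f, repr_lemma L' (S ∪ S') hS2' f]
  exact Finset.sum_congr rfl fun x _ => by rw [hδ x]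

lemma restrict_surjective :
    Function.Surjective (restrictCLM (K := K) (X := X)) := by
  intro ℓ
  obtain ⟨S, hS⟩ := exists_finset_support' ℓ
  refine ⟨∑ x ∈ S, ℓ (deltaFin K x) • (ContinuousLinearMap.proj x : (X → K) →L[K] K), ?_⟩
  ext p
  show (∑ x ∈ S, ℓ (deltaFin K x) • (ContinuousLinearMap.proj x : (X → K) →L[K] K))
      (p : X → K) = ℓ p
  rw [ContinuousLinearMap.sum_apply]
  simp only [ContinuousLinearMap.smul_apply, ContinuousLinearMap.proj_apply, smul_eq_mul]
  have key : ℓ (p - ∑ x ∈ S, (p : X → K) x • deltaFin K x) = 0 := by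
    refine hS _ fun y hy => ?_
    have hcoe : ((p - ∑ x ∈ S, (p : X → K) x • deltaFin K x : finSuppSubmodule K X) : X → K)
        = (p : X → K) - ∑ x ∈ S, (p : X → K) x • (Pi.single x (1 : K) : X → K) := by
      push_cast
      rfl
    rw [hcoe, Pi.sub_apply, sum_single_apply S (p : X → K) hy, sub_self]
  have h2 : ℓ p = ℓ (∑ x ∈ S, (p : X → K) x • deltaFin K x) := by
    have := map_sub ℓ p (∑ x ∈ S, (p : X → K) x • deltaFin K x)
    rw [key] at this
    exact (sub_eq_zero.mp this.symm)
  rw [h2, map_sum]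
  exact Finset.sum_congr rfl fun x _ => by
    rw [map_smul, smul_eq_mul, mul_comm]

end Aux


/-- Let `K` be a field with the discrete topology, `X` a set; equip `K^X` with the
product topology and `K^(X)` with the subspace topology.  The map `Ψ` sending a
continuous linear form `ℓ` on `K^(X)` to `Ψ(ℓ) : f ↦ ∑ x, f x * ℓ(δ_x)` is well
defined (`Ψ ℓ` is continuous and the family `(f x * ℓ(δ_x))_x` is summable with sum
`Ψ ℓ f`), `Ψ ℓ` extends `ℓ`, and `Ψ` is a linear isomorphism from `(K^(X))'` onto
`(K^X)'`. -/
theorem stmt16 {K : Type*} [Field K] [TopologicalSpace K] [DiscreteTopology K]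
    [IsTopologicalRing K] (X : Type*) [DecidableEq X] :
    ∃ Ψ : ((finSuppSubmodule K X) →L[K] K) ≃ₗ[K] ((X → K) →L[K] K),
      ∀ ℓ : (finSuppSubmodule K X) →L[K] K,
        (∀ f : X → K, HasSum (fun x : X => f x * ℓ (deltaFin K x)) (Ψ ℓ f)) ∧
        (∀ p : finSuppSubmodule K X, Ψ ℓ (p : X → K) = ℓ p) := by
  have hbij : Function.Bijective (restrictCLM (K := K) (X := X)) :=
    ⟨restrict_injective, restrict_surjective⟩
  refine ⟨(LinearEquiv.ofBijective _ hbij).symm, fun ℓ => ?_⟩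
  set L := (LinearEquiv.ofBijective _ hbij).symm ℓ with hLdef
  have hRL : restrictCLM L = ℓ := (LinearEquiv.ofBijective _ hbij).apply_symm_apply ℓ
  have hext : ∀ p : finSuppSubmodule K X, L (p : X → K) = ℓ p := by
    intro p
    rw [← hRL]
    rfl
  have hδ : ∀ x : X, ℓ (deltaFin K x) = L (Pi.single x (1 : K)) := fun x =>
    (hext (deltaFin K x)).symm
  obtain ⟨S, hS⟩ := exists_finset_support L
  constructor
  · intro f
    have h1 : ∀ x ∉ S, f x * ℓ (deltaFin K x) = 0 := by
      intro x hx
      have hz : L (Pi.single x (1 : K)) = 0 := by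
        refine hS _ fun y hy => ?_
        exact Pi.single_eq_of_ne (fun h : y = x => hx (h ▸ hy)) 1
      rw [hδ x, hz, mul_zero]
    have h2 := hasSum_sum_of_ne_finset_zero (L := SummationFilter.unconditional X) h1
    have h3 : (∑ x ∈ S, f x * ℓ (deltaFin K x)) = L f := by
      rw [repr_lemma L S hS f]
      exact Finset.sum_congr rfl fun x _ => by rw [hδ x]
    rwa [h3] at h2
  · exact hext
end
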